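/- For every t ≥ 0 and every x ∈ ℝ one has the identity X(t, Z^0(x) − a·t) − λ̄^0_−·t = ψ(x) − (1/2a)·(H(Z^0(x) − 2a·t) − H̄^−); consequently X(t, Z^0(x) − a·t) − λ̄^0_−·t → ψ(x) and X(t, Z^0(x) + a·t) − μ̄^0_+·t → φ(x) as t → +∞, pointwise on ℝ and uniformly on every compact subset of ℝ. -/

import Mathlib

open MeasureTheory Filter Set

lemma aux_intInt {g : ℝ → ℝ} (hg : Measurable g) {C : ℝ} (hC : ∀ x, |g x| ≤ C)
    (u v : ℝ) : IntervalIntegrable g volume u v := by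
  rw [intervalIntegrable_iff]
  exact Integrable.mono' (integrableOn_const measure_Ioc_lt_top.ne)
    hg.aestronglyMeasurable (ae_of_all _ hC)

lemma key_cov (f h : ℝ → ℝ) (hf : Measurable f) (hh : Measurable h)
    (c1 c2 : ℝ) (hc1 : 0 < c1) (hfb : ∀ x, c1 ≤ f x ∧ f x ≤ c2)
    (Z0 X0 : ℝ → ℝ) (hZd : ∀ u v, Z0 v - Z0 u = ∫ ξ in u..v, f ξ)
    (hX0Z0 : ∀ x, X0 (Z0 x) = x) (hZ0X0 : ∀ z, Z0 (X0 z) = z)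
    (hhnn : ∀ x, 0 ≤ h x) (k : ℝ) (hknn : 0 ≤ k) (hk : ∀ x, h (Z0 x) * f x = k) :
    ∀ u v, u ≤ v → ∫ ξ in (Z0 u)..(Z0 v), h ξ = k * (v - u) := by
  have hfC : ∀ x, |f x| ≤ |c1| + |c2| := by
    intro x
    have := (hfb x).1; have := (hfb x).2
    rw [abs_le]; constructor <;> cases abs_cases c1 <;> cases abs_cases c2 <;> nlinarith
  have hfint : ∀ u v : ℝ, IntervalIntegrable f volume u v := aux_intInt hf hfC
  have hZs : StrictMono Z0 := by
    intro u v huv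
    have h1 : c1 * (v - u) ≤ Z0 v - Z0 u := by
      rw [hZd u v]
      calc c1 * (v - u) = ∫ _ in u..v, c1 := by
            rw [intervalIntegral.integral_const, smul_eq_mul]; ring
        _ ≤ ∫ ξ in u..v, f ξ := by
            apply intervalIntegral.integral_mono_on huv.le (by simp) (hfint u v)
            intro x _; exact (hfb x).1
    nlinarith
  have hZm : Measurable Z0 := hZs.monotone.measurable
  have hX0m : Monotone X0 := by
    intro z w hzw
    have := hZs.le_iff_le (a := X0 z) (b := X0 w)
    rw [hZ0X0, hZ0X0] at this
    exact this.mp hzw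
  set ν : Measure ℝ := volume.withDensity (fun x => ENNReal.ofReal (f x)) with hν
  have hpre : ∀ c d : ℝ, Z0 ⁻¹' (Ioc c d) = Ioc (X0 c) (X0 d) := by
    intro c d
    ext y
    simp only [mem_preimage, mem_Ioc]
    constructor
    · rintro ⟨h1, h2⟩
      constructor
      · have := hZs.lt_iff_lt (a := X0 c) (b := y); rw [hZ0X0] at this; exact this.mp h1
      · have := hZs.le_iff_le (a := y) (b := X0 d); rw [hZ0X0] at this; exact this.mp h2
    · rintro ⟨h1, h2⟩
      constructor
      · have := hZs.lt_iff_lt (a := X0 c) (b := y); rw [hZ0X0] at this; exact this.mpr h1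
      · have := hZs.le_iff_le (a := y) (b := X0 d); rw [hZ0X0] at this; exact this.mpr h2
  have hνIoc : ∀ u v : ℝ, u ≤ v → ν (Ioc u v) = ENNReal.ofReal (Z0 v - Z0 u) := by
    intro u v huv
    rw [hν, withDensity_apply _ measurableSet_Ioc,
      ← ofReal_integral_eq_lintegral_ofReal
        ((intervalIntegrable_iff_integrableOn_Ioc_of_le huv).mp (hfint u v))
        (ae_of_all _ fun x => le_trans hc1.le (hfb x).1)]
    rw [hZd u v, intervalIntegral.integral_of_le huv]
  have hmap : ν.map Z0 = volume := by
    refine (Measure.ext_of_Ioc volume (ν.map Z0) ?_).symm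
    intro c d hcd
    rw [Measure.map_apply hZm measurableSet_Ioc, hpre,
      hνIoc _ _ (hX0m hcd.le), hZ0X0, hZ0X0, Real.volume_Ioc]
  intro u v huv
  have hZuv : Z0 u ≤ Z0 v := hZs.monotone huv
  rw [intervalIntegral.integral_of_le hZuv,
    integral_eq_lintegral_of_nonneg_ae (ae_of_all _ hhnn) hh.aestronglyMeasurable]
  have hl : ∫⁻ ξ in Ioc (Z0 u) (Z0 v), ENNReal.ofReal (h ξ) = ENNReal.ofReal (k * (v - u)) := by
    conv_lhs => rw [← hmap]
    rw [setLIntegral_map measurableSet_Ioc hh.ennreal_ofReal hZm]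
    have : Z0 ⁻¹' (Ioc (Z0 u) (Z0 v)) = Ioc u v := by rw [hpre, hX0Z0, hX0Z0]
    rw [this, hν, restrict_withDensity measurableSet_Ioc,
      lintegral_withDensity_eq_lintegral_mul _ hf.ennreal_ofReal
        (show Measurable fun x => ENNReal.ofReal (h (Z0 x)) from (hh.comp hZm).ennreal_ofReal)]
    have hpt : ∀ x : ℝ, (ENNReal.ofReal (f x) * ENNReal.ofReal (h (Z0 x))) = ENNReal.ofReal k := by
      intro x
      rw [← ENNReal.ofReal_mul (le_trans hc1.le (hfb x).1), mul_comm (f x), hk]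
    simp only [Pi.mul_apply, hpt]
    rw [setLIntegral_const, Real.volume_Ioc, ← ENNReal.ofReal_mul hknn]
  rw [hl, ENNReal.toReal_ofReal (by nlinarith)]

set_option maxHeartbeats 2000000 in
theorem stmt_17
    (a : ℝ) (ha : 0 < a)
    (lam0 mu0 : ℝ → ℝ) (hlm : Measurable lam0) (hmm : Measurable mu0)
    (hlbdd : BddAbove (Set.range lam0)) (hlbdd' : BddBelow (Set.range lam0))
    (hmbdd : BddAbove (Set.range mu0)) (hmbdd' : BddBelow (Set.range mu0))
    (hsep : sSup (Set.range lam0) < sInf (Set.range mu0))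
    (lbar mbar : ℝ)
    (hlL1 : Integrable (fun x => lam0 x - lbar))
    (hmL1 : Integrable (fun x => mu0 x - mbar))
    (hllim : Tendsto lam0 atBot (nhds lbar))
    (hmlim : Tendsto mu0 atTop (nhds mbar))
    (Z0 X0 : ℝ → ℝ)
    (hZ0 : ∀ x, Z0 x = ∫ ξ in (0:ℝ)..x, 2 * a / (mu0 ξ - lam0 ξ))
    (hX0Z0 : ∀ x, X0 (Z0 x) = x) (hZ0X0 : ∀ z, Z0 (X0 z) = z)
    (X : ℝ → ℝ → ℝ)
    (hX : ∀ t z, X t z = (1 / (2 * a)) * (∫ ξ in (0:ℝ)..(z + a * t), mu0 (X0 ξ))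
        - (1 / (2 * a)) * (∫ ξ in (0:ℝ)..(z - a * t), lam0 (X0 ξ)))
    (H I : ℝ → ℝ)
    (hH : ∀ y, H y = ∫ ξ in (1:ℝ)..y, (lam0 (X0 ξ) - lbar))
    (hI : ∀ y, I y = ∫ ξ in (1:ℝ)..y, (mu0 (X0 ξ) - mbar))
    (Hbar Ibar : ℝ)
    (hHbar : Tendsto H atBot (nhds Hbar))
    (hIbar : Tendsto I atTop (nhds Ibar))
    (ψ φ : ℝ → ℝ)
    (hψ : ∀ x, ψ x = x + (1 / (2 * a)) * (H (Z0 x) - Hbar))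
    (hφ : ∀ x, φ x = x - (1 / (2 * a)) * (I (Z0 x) - Ibar)) :
    (∀ t, 0 ≤ t → ∀ x : ℝ,
      X t (Z0 x - a * t) - lbar * t
        = ψ x - (1 / (2 * a)) * (H (Z0 x - 2 * a * t) - Hbar)) ∧
    (∀ x : ℝ, Tendsto (fun t => X t (Z0 x - a * t) - lbar * t) atTop (nhds (ψ x))) ∧
    (∀ s : Set ℝ, IsCompact s → TendstoUniformlyOn
        (fun t x => X t (Z0 x - a * t) - lbar * t) ψ atTop s) ∧
    (∀ x : ℝ, Tendsto (fun t => X t (Z0 x + a * t) - mbar * t) atTop (nhds (φ x))) ∧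
    (∀ s : Set ℝ, IsCompact s → TendstoUniformlyOn
        (fun t x => X t (Z0 x + a * t) - mbar * t) φ atTop s) := by
  -- basic bounds
  set Lsup := sSup (Set.range lam0) with hLsup
  set Linf := sInf (Set.range lam0) with hLinf
  set Msup := sSup (Set.range mu0) with hMsup
  set Minf := sInf (Set.range mu0) with hMinf
  have hlub : ∀ x, lam0 x ≤ Lsup := fun x => le_csSup hlbdd ⟨x, rfl⟩
  have hllb : ∀ x, Linf ≤ lam0 x := fun x => csInf_le hlbdd' ⟨x, rfl⟩
  have hmub : ∀ x, mu0 x ≤ Msup := fun x => le_csSup hmbdd ⟨x, rfl⟩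
  have hmlb : ∀ x, Minf ≤ mu0 x := fun x => csInf_le hmbdd' ⟨x, rfl⟩
  have hd1 : 0 < Minf - Lsup := by linarith
  have hdpos : ∀ x, 0 < mu0 x - lam0 x := fun x => by
    have := hlub x; have := hmlb x; linarith
  have hdub : ∀ x, mu0 x - lam0 x ≤ Msup - Linf := fun x => by
    have := hllb x; have := hmub x; linarith
  have hdlb : ∀ x, Minf - Lsup ≤ mu0 x - lam0 x := fun x => by
    have := hlub x; have := hmlb x; linarith
  have hd2 : 0 < Msup - Linf := lt_of_lt_of_le hd1 (le_trans (hdlb 0) (hdub 0))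
  set f : ℝ → ℝ := fun x => 2 * a / (mu0 x - lam0 x) with hf
  have hfm : Measurable f := measurable_const.div (hmm.sub hlm)
  set c1 : ℝ := 2 * a / (Msup - Linf) with hc1d
  set c2 : ℝ := 2 * a / (Minf - Lsup) with hc2d
  have hc1 : 0 < c1 := by positivity
  have hfb : ∀ x, c1 ≤ f x ∧ f x ≤ c2 := by
    intro x
    constructor
    · exact div_le_div_of_nonneg_left (by positivity) (hdpos x) (hdub x)
    · exact div_le_div_of_nonneg_left (by positivity) hd1 (hdlb x)
  have hfC : ∀ x, |f x| ≤ |c1| + |c2| := by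
    intro x
    have := (hfb x).1; have := (hfb x).2
    rw [abs_le]; constructor <;> cases abs_cases c1 <;> cases abs_cases c2 <;> nlinarith
  have hfint : ∀ u v : ℝ, IntervalIntegrable f volume u v := aux_intInt hfm hfC
  have hZd : ∀ u v, Z0 v - Z0 u = ∫ ξ in u..v, f ξ := by
    intro u v
    rw [hZ0 u, hZ0 v]
    exact intervalIntegral.integral_interval_sub_left (hfint 0 v) (hfint 0 u)
  -- monotonicity
  have hZs : StrictMono Z0 := by
    intro u v huv
    have h1 : c1 * (v - u) ≤ Z0 v - Z0 u := by
      rw [hZd u v]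
      calc c1 * (v - u) = ∫ _ in u..v, c1 := by
            rw [intervalIntegral.integral_const, smul_eq_mul]; ring
        _ ≤ ∫ ξ in u..v, f ξ := by
            apply intervalIntegral.integral_mono_on huv.le (by simp) (hfint u v)
            intro x _; exact (hfb x).1
    nlinarith
  have hX0m : Monotone X0 := by
    intro z w hzw
    have := hZs.le_iff_le (a := X0 z) (b := X0 w)
    rw [hZ0X0, hZ0X0] at this
    exact this.mp hzw
  have hX0meas : Measurable X0 := hX0m.measurable
  -- the composed integrands
  have hglm : Measurable (fun ξ => lam0 (X0 ξ)) := hlm.comp hX0meas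
  have hgmm : Measurable (fun ξ => mu0 (X0 ξ)) := hmm.comp hX0meas
  have hglC : ∀ ξ, |lam0 (X0 ξ)| ≤ |Linf| + |Lsup| := by
    intro ξ
    have h1 := hlub (X0 ξ); have h2 := hllb (X0 ξ)
    rw [abs_le]
    constructor
    · nlinarith [neg_abs_le Linf, abs_nonneg Lsup]
    · nlinarith [le_abs_self Lsup, abs_nonneg Linf]
  have hgmC : ∀ ξ, |mu0 (X0 ξ)| ≤ |Minf| + |Msup| := by
    intro ξ
    have h1 := hmub (X0 ξ); have h2 := hmlb (X0 ξ)
    rw [abs_le]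
    constructor
    · nlinarith [neg_abs_le Minf, abs_nonneg Msup]
    · nlinarith [le_abs_self Msup, abs_nonneg Minf]
  have hglint : ∀ u v : ℝ, IntervalIntegrable (fun ξ => lam0 (X0 ξ)) volume u v :=
    aux_intInt hglm hglC
  have hgmint : ∀ u v : ℝ, IntervalIntegrable (fun ξ => mu0 (X0 ξ)) volume u v :=
    aux_intInt hgmm hgmC
  -- key change of variables
  have hkeyuv := key_cov f (fun ξ => mu0 (X0 ξ) - lam0 (X0 ξ)) hfm (hgmm.sub hglm)
    c1 c2 hc1 hfb Z0 X0 hZd hX0Z0 hZ0X0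
    (fun x => le_of_lt (hdpos (X0 x))) (2 * a) (by positivity)
    (fun x => by
      have hne := (hdpos x).ne'
      simp only [hX0Z0 x, hf]
      field_simp)
  have hZ00 : Z0 0 = 0 := by rw [hZ0]; simp
  have keyh : ∀ x : ℝ, (∫ ξ in (0:ℝ)..(Z0 x), (mu0 (X0 ξ) - lam0 (X0 ξ))) = 2 * a * x := by
    intro x
    rcases le_total 0 x with hx | hx
    · have h1 := hkeyuv 0 x hx; rw [hZ00] at h1; rw [h1]; ring
    · have h1 := hkeyuv x 0 hx; rw [hZ00] at h1
      rw [intervalIntegral.integral_symm, h1]; ring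
  have keyx : ∀ x : ℝ, (∫ ξ in (0:ℝ)..(Z0 x), mu0 (X0 ξ))
      - (∫ ξ in (0:ℝ)..(Z0 x), lam0 (X0 ξ)) = 2 * a * x := by
    intro x
    rw [← intervalIntegral.integral_sub (hgmint _ _) (hglint _ _)]
    exact keyh x
  -- increments of H and I
  have Hdiff : ∀ y z : ℝ, H z - H y = (∫ ξ in y..z, lam0 (X0 ξ)) - lbar * (z - y) := by
    intro y z
    rw [hH z, hH y,
      intervalIntegral.integral_interval_sub_left
        ((hglint 1 z).sub (intervalIntegrable_const))
        ((hglint 1 y).sub (intervalIntegrable_const)),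
      intervalIntegral.integral_sub (hglint y z) (intervalIntegrable_const),
      intervalIntegral.integral_const, smul_eq_mul]
    ring
  have Idiff : ∀ y z : ℝ, I z - I y = (∫ ξ in y..z, mu0 (X0 ξ)) - mbar * (z - y) := by
    intro y z
    rw [hI z, hI y,
      intervalIntegral.integral_interval_sub_left
        ((hgmint 1 z).sub (intervalIntegrable_const))
        ((hgmint 1 y).sub (intervalIntegrable_const)),
      intervalIntegral.integral_sub (hgmint y z) (intervalIntegrable_const),
      intervalIntegral.integral_const, smul_eq_mul]
    ring
  have ha2 : (2 * a) ≠ 0 := by positivity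
  -- identity on the lambda side, for all t
  have id1 : ∀ t x : ℝ, X t (Z0 x - a * t) - lbar * t
      = ψ x - (1 / (2 * a)) * (H (Z0 x - 2 * a * t) - Hbar) := by
    intro t x
    rw [hX, hψ, show Z0 x - a * t + a * t = Z0 x by ring,
      show Z0 x - a * t - a * t = Z0 x - 2 * a * t by ring]
    have eAD := keyx x
    have eBC := intervalIntegral.integral_add_adjacent_intervals
      (hglint 0 (Z0 x - 2 * a * t)) (hglint (Z0 x - 2 * a * t) (Z0 x))
    have eH := Hdiff (Z0 x - 2 * a * t) (Z0 x)
    field_simp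
    linear_combination eAD - eBC - eH
  have id2 : ∀ t x : ℝ, X t (Z0 x + a * t) - mbar * t
      = φ x + (1 / (2 * a)) * (I (Z0 x + 2 * a * t) - Ibar) := by
    intro t x
    rw [hX, hφ, show Z0 x + a * t + a * t = Z0 x + 2 * a * t by ring,
      show Z0 x + a * t - a * t = Z0 x by ring]
    have eAD := keyx x
    have eBC := intervalIntegral.integral_add_adjacent_intervals
      (hgmint 0 (Z0 x)) (hgmint (Z0 x) (Z0 x + 2 * a * t))
    have eI := Idiff (Z0 x) (Z0 x + 2 * a * t)
    have hx2 : 2 * a * x * (1 / (2 * a)) = x := by field_simp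
    have hmt : 2 * a * (mbar * t) * (1 / (2 * a)) = mbar * t := by field_simp
    linear_combination (1/(2*a)) * eAD - (1/(2*a)) * eBC - (1/(2*a)) * eI + hx2 + hmt
  -- limits of the shifted arguments
  have hlinB : ∀ x : ℝ, Tendsto (fun t : ℝ => Z0 x - 2 * a * t) atTop atBot := by
    intro x
    have h1 : Tendsto (fun t : ℝ => 2 * a * t) atTop atTop :=
      Tendsto.const_mul_atTop (by positivity) tendsto_id
    have h2 : Tendsto (fun t : ℝ => -(2 * a * t)) atTop atBot :=
      tendsto_neg_atTop_atBot.comp h1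
    simpa [sub_eq_add_neg] using tendsto_atBot_add_const_left atTop (Z0 x) h2
  have hlinT : ∀ x : ℝ, Tendsto (fun t : ℝ => Z0 x + 2 * a * t) atTop atTop := by
    intro x
    have h1 : Tendsto (fun t : ℝ => 2 * a * t) atTop atTop :=
      Tendsto.const_mul_atTop (by positivity) tendsto_id
    exact tendsto_atTop_add_const_left atTop (Z0 x) h1
  refine ⟨fun t _ x => id1 t x, ?_, ?_, ?_, ?_⟩
  · intro x
    have heq : (fun t => X t (Z0 x - a * t) - lbar * t)
        = fun t => ψ x - (1 / (2 * a)) * (H (Z0 x - 2 * a * t) - Hbar) :=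
      funext fun t => id1 t x
    rw [heq]
    have hHt : Tendsto (fun t : ℝ => H (Z0 x - 2 * a * t)) atTop (nhds Hbar) :=
      hHbar.comp (hlinB x)
    have hconst : Tendsto (fun _ : ℝ => ψ x) atTop (nhds (ψ x)) := tendsto_const_nhds
    have := hconst.sub ((hHt.sub (tendsto_const_nhds : Tendsto (fun _ : ℝ => Hbar) atTop (nhds Hbar))).const_mul (1 / (2 * a)))
    simpa using this
  · intro s hs
    rw [Metric.tendstoUniformlyOn_iff]
    intro ε hε
    obtain ⟨R, hR⟩ := hs.isBounded.subset_closedBall 0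
    have hεa : 0 < ε * a := by positivity
    obtain ⟨N, hN⟩ := (eventually_atBot.mp ((Metric.tendsto_nhds.mp hHbar) (ε * a) hεa))
    filter_upwards [eventually_ge_atTop ((Z0 R - N) / (2 * a))] with t ht x hx
    have hxR : x ≤ R := by
      have := hR hx
      rw [Real.closedBall_eq_Icc] at this
      linarith [this.2]
    have hZxR : Z0 x ≤ Z0 R := hZs.monotone hxR
    have harg : Z0 x - 2 * a * t ≤ N := by
      have h2 : Z0 R - N ≤ 2 * a * t := by
        rw [div_le_iff₀ (by positivity)] at ht
        linarith
      linarith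
    have hdist := hN _ harg
    rw [Real.dist_eq] at hdist ⊢
    rw [id1 t x]
    have : ψ x - (ψ x - 1 / (2 * a) * (H (Z0 x - 2 * a * t) - Hbar))
        = 1 / (2 * a) * (H (Z0 x - 2 * a * t) - Hbar) := by ring
    rw [this, abs_mul, abs_of_pos (by positivity : (0:ℝ) < 1 / (2 * a))]
    calc 1 / (2 * a) * |H (Z0 x - 2 * a * t) - Hbar| < 1 / (2 * a) * (ε * a) := by
          apply mul_lt_mul_of_pos_left hdist (by positivity)
      _ = ε / 2 := by field_simp
      _ < ε := by linarith
  · intro x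
    have heq : (fun t => X t (Z0 x + a * t) - mbar * t)
        = fun t => φ x + (1 / (2 * a)) * (I (Z0 x + 2 * a * t) - Ibar) :=
      funext fun t => id2 t x
    rw [heq]
    have hIt : Tendsto (fun t : ℝ => I (Z0 x + 2 * a * t)) atTop (nhds Ibar) :=
      hIbar.comp (hlinT x)
    have hconst : Tendsto (fun _ : ℝ => φ x) atTop (nhds (φ x)) := tendsto_const_nhds
    have := hconst.add ((hIt.sub (tendsto_const_nhds : Tendsto (fun _ : ℝ => Ibar) atTop (nhds Ibar))).const_mul (1 / (2 * a)))
    simpa using this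
  · intro s hs
    rw [Metric.tendstoUniformlyOn_iff]
    intro ε hε
    obtain ⟨R, hR⟩ := hs.isBounded.subset_closedBall 0
    have hεa : 0 < ε * a := by positivity
    obtain ⟨N, hN⟩ := (eventually_atTop.mp ((Metric.tendsto_nhds.mp hIbar) (ε * a) hεa))
    filter_upwards [eventually_ge_atTop ((N - Z0 (-R)) / (2 * a))] with t ht x hx
    have hxR : -R ≤ x := by
      have := hR hx
      rw [Real.closedBall_eq_Icc] at this
      linarith [this.1]
    have hZxR : Z0 (-R) ≤ Z0 x := hZs.monotone hxR
    have harg : N ≤ Z0 x + 2 * a * t := by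
      have h2 : N - Z0 (-R) ≤ 2 * a * t := by
        rw [div_le_iff₀ (by positivity)] at ht
        linarith
      linarith
    have hdist := hN _ harg
    rw [Real.dist_eq] at hdist ⊢
    rw [id2 t x]
    have : φ x - (φ x + 1 / (2 * a) * (I (Z0 x + 2 * a * t) - Ibar))
        = -(1 / (2 * a) * (I (Z0 x + 2 * a * t) - Ibar)) := by ring
    rw [this, abs_neg, abs_mul, abs_of_pos (by positivity : (0:ℝ) < 1 / (2 * a))]
    calc 1 / (2 * a) * |I (Z0 x + 2 * a * t) - Ibar| < 1 / (2 * a) * (ε * a) := by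
          apply mul_lt_mul_of_pos_left hdist (by positivity)
      _ = ε / 2 := by field_simp
      _ < ε := by linarith
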